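/- Call a line in ℝ² a distinguished line of type (i,j), for (i,j) ∈ {(1,0),(0,1),(1,1),(−1,1)}, if it equals {T(m,n) + t·dT(i,j) : t ∈ ℝ} for some (m,n) ∈ ℤ². If two distinct distinguished lines of the same type (i,j) both intersect the interior of one common edge of an integer unit square (a segment {k}×[l,l+1] or [k,k+1]×{l} with k,l ∈ ℤ), then (i,j) = (−1,1) and that edge is horizontal. -/

import Mathlib

/-- The linear part of the canonical affine transformation, with parameter `A`. -/
noncomputable def dT (A : ℝ) (v : ℝ × ℝ) : ℝ × ℝ :=
  (((A ^ 2 + A) * v.1 + (A + 1) * v.2) / (A + 1),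
   ((-A ^ 2 + 2 * A + 1) * v.1 + (-2 * A) * v.2) / (A + 1))

/-- The canonical affine transformation `T` for the parameter `p/q`,
with `τ` the inverse of `2p` mod `p+q`. -/
noncomputable def Tc (p q τ : ℤ) (v : ℝ × ℝ) : ℝ × ℝ :=
  dT ((p : ℝ) / (q : ℝ)) v +
    (1 / (2 * (q : ℝ)), -1 / (2 * (q : ℝ)) + 1 / ((p : ℝ) + (q : ℝ)) + (τ : ℝ))

/-- The distinguished line of type `(i,j)` through the graph grid point `T(m,n)`. -/
noncomputable def distLine (p q τ i j m n : ℤ) : Set (ℝ × ℝ) :=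
  {z | ∃ t : ℝ, z = Tc p q τ ((m : ℝ), (n : ℝ)) +
      t • dT ((p : ℝ) / (q : ℝ)) ((i : ℝ), (j : ℝ))}

lemma aux_int_zero (N : ℤ) (C D X : ℝ) (hD : 0 < D) (hCD : D ≤ C)
    (h : X * D = C * N) (hX : |X| < 1) : N = 0 := by
  have hC : 0 < C := hD.trans_le hCD
  have h1 : C * |(N : ℝ)| < C := by
    calc C * |(N : ℝ)| = |C * N| := by rw [abs_mul, abs_of_pos hC]
    _ = |X * D| := by rw [h]
    _ = |X| * D := by rw [abs_mul, abs_of_pos hD]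
    _ < 1 * D := by apply mul_lt_mul_of_pos_right hX hD
    _ = D := one_mul D
    _ ≤ C := hCD
  have h2 : |(N : ℝ)| < 1 := by nlinarith
  have h3 : |N| < 1 := by exact_mod_cast (by push_cast; exact h2 : ((|N| : ℤ) : ℝ) < 1)
  rcases abs_lt.mp h3 with ⟨h4, h5⟩
  omega

lemma mem_coords {p q τ i j m n : ℤ} {z : ℝ × ℝ} (hA1 : (p : ℝ) / q + 1 ≠ 0)
    (hz : z ∈ distLine p q τ i j m n) :
    ∃ t : ℝ,
      z.1 = (p : ℝ)/q * m + n + 1/(2*(q:ℝ)) + t * ((p : ℝ)/q * i + j) ∧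
      z.2 = ((-((p:ℝ)/q)^2 + 2*((p:ℝ)/q) + 1) * m + (-2*((p:ℝ)/q)) * n) / ((p:ℝ)/q + 1)
              + (-1/(2*(q:ℝ)) + 1/((p:ℝ)+(q:ℝ)) + (τ:ℝ))
              + t * (((-((p:ℝ)/q)^2 + 2*((p:ℝ)/q) + 1) * i + (-2*((p:ℝ)/q)) * j) / ((p:ℝ)/q + 1)) := by
  obtain ⟨t, rfl⟩ := hz
  refine ⟨t, ?_, ?_⟩
  · simp only [Tc, dT, Prod.fst_add, Prod.smul_fst, smul_eq_mul]
    generalize (p:ℝ)/q = A at hA1 ⊢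
    field_simp
  · simp only [Tc, dT, Prod.snd_add, Prod.smul_snd, smul_eq_mul]

lemma key_v_gen (A c1 c2 I J M N M' N' t t' z1 z1' z2 z2' : ℝ) (hA1 : A + 1 ≠ 0)
    (h1 : z1 = A*M + N + c1 + t*(A*I+J))
    (h1' : z1' = A*M' + N' + c1 + t'*(A*I+J))
    (h2 : z2 = ((-A^2+2*A+1)*M + (-2*A)*N)/(A+1) + c2 + t*(((-A^2+2*A+1)*I + (-2*A)*J)/(A+1)))
    (h2' : z2' = ((-A^2+2*A+1)*M' + (-2*A)*N')/(A+1) + c2 + t'*(((-A^2+2*A+1)*I + (-2*A)*J)/(A+1)))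
    (hk : z1 = z1') :
    (z2 - z2') * (A*I + J) = (A+1) * ((M - M')*J - (N - N')*I) := by
  rw [h1, h1'] at hk
  have e1 : (t - t') * (A*I+J) = A*(M'-M) + (N'-N) := by linear_combination hk
  have e2 : z2 - z2' = (((-A^2+2*A+1)*(M-M') + (-2*A)*(N-N'))
      + (t-t')*((-A^2+2*A+1)*I + (-2*A)*J))/(A+1) := by
    rw [h2, h2']; ring
  rw [e2, div_mul_eq_mul_div, div_eq_iff hA1]
  linear_combination ((-A^2+2*A+1)*I + (-2*A)*J) * e1

lemma key_h_gen (A c1 c2 I J M N M' N' t t' z1 z1' z2 z2' : ℝ) (hA1 : A + 1 ≠ 0)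
    (h1 : z1 = A*M + N + c1 + t*(A*I+J))
    (h1' : z1' = A*M' + N' + c1 + t'*(A*I+J))
    (h2 : z2 = ((-A^2+2*A+1)*M + (-2*A)*N)/(A+1) + c2 + t*(((-A^2+2*A+1)*I + (-2*A)*J)/(A+1)))
    (h2' : z2' = ((-A^2+2*A+1)*M' + (-2*A)*N')/(A+1) + c2 + t'*(((-A^2+2*A+1)*I + (-2*A)*J)/(A+1)))
    (hk : z2 = z2') :
    (z1 - z1') * ((-A^2+2*A+1)*I + (-2*A)*J) = -(A+1)^2 * ((M - M')*J - (N - N')*I) := by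
  have e2 : z2 - z2' = (((-A^2+2*A+1)*(M-M') + (-2*A)*(N-N'))
      + (t-t')*((-A^2+2*A+1)*I + (-2*A)*J))/(A+1) := by
    rw [h2, h2']; ring
  have h0 : (((-A^2+2*A+1)*(M-M') + (-2*A)*(N-N'))
      + (t-t')*((-A^2+2*A+1)*I + (-2*A)*J))/(A+1) = 0 := by rw [← e2, hk]; ring
  have e1 : ((-A^2+2*A+1)*(M-M') + (-2*A)*(N-N'))
      + (t-t')*((-A^2+2*A+1)*I + (-2*A)*J) = 0 := by
    rcases div_eq_zero_iff.mp h0 with h | h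
    · exact h
    · exact absurd h hA1
  rw [h1, h1']
  linear_combination (A*I+J) * e1

lemma distLine_congr (p q τ i j m n m' n' c : ℤ)
    (hm : m = m' + c * i) (hn : n = n' + c * j) :
    distLine p q τ i j m n = distLine p q τ i j m' n' := by
  have hT : Tc p q τ ((m : ℝ), (n : ℝ)) =
      Tc p q τ ((m' : ℝ), (n' : ℝ)) + (c : ℝ) • dT ((p : ℝ)/q) ((i : ℝ), (j : ℝ)) := by
    subst hm hn
    apply Prod.ext <;>
      simp only [Tc, dT, Prod.fst_add, Prod.snd_add, Prod.smul_fst, Prod.smul_snd,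
        smul_eq_mul] <;> push_cast <;> ring
  ext z
  constructor
  · rintro ⟨t, rfl⟩
    exact ⟨t + c, by rw [hT, add_smul]; abel⟩
  · rintro ⟨t, rfl⟩
    refine ⟨t - c, ?_⟩
    rw [hT, sub_smul]; abel

set_option maxHeartbeats 1000000 in
theorem stmt5 (p q : ℤ) (hp : 0 < p) (hpq : p < q) (hcop : IsCoprime p q)
    (he : Even (p * q)) (τ : ℤ) (hτ0 : 0 < τ) (hτω : τ < p + q)
    (hτ : (p + q) ∣ (2 * p * τ - 1)) :
    ∀ i j m n m' n' : ℤ,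
      ((i, j) : ℤ × ℤ) ∈ ({(1, 0), (0, 1), (1, 1), (-1, 1)} : Set (ℤ × ℤ)) →
      distLine p q τ i j m n ≠ distLine p q τ i j m' n' →
      ∀ k l : ℤ,
        -- the two lines never both meet the interior of a common vertical edge
        (¬((∃ z ∈ distLine p q τ i j m n,
              z.1 = (k : ℝ) ∧ z.2 ∈ Set.Ioo (l : ℝ) ((l : ℝ) + 1)) ∧
           (∃ z ∈ distLine p q τ i j m' n',
              z.1 = (k : ℝ) ∧ z.2 ∈ Set.Ioo (l : ℝ) ((l : ℝ) + 1)))) ∧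
        -- if they both meet the interior of a common horizontal edge, then (i,j) = (−1,1)
        (((∃ z ∈ distLine p q τ i j m n,
              z.2 = (l : ℝ) ∧ z.1 ∈ Set.Ioo (k : ℝ) ((k : ℝ) + 1)) ∧
          (∃ z ∈ distLine p q τ i j m' n',
              z.2 = (l : ℝ) ∧ z.1 ∈ Set.Ioo (k : ℝ) ((k : ℝ) + 1))) →
          ((i, j) : ℤ × ℤ) = (-1, 1)) := by
  intro i j m n m' n' hij hne k l
  have hp0 : (0:ℝ) < (p:ℝ) := by exact_mod_cast hp
  have hq0 : (0:ℝ) < (q:ℝ) := by exact_mod_cast hp.trans hpq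
  have hqne : (q:ℝ) ≠ 0 := ne_of_gt hq0
  have hA0 : 0 < (p:ℝ)/q := div_pos hp0 hq0
  have hAlt : (p:ℝ)/q < 1 := (div_lt_one hq0).mpr (by exact_mod_cast hpq)
  have hA1 : (p:ℝ)/q + 1 ≠ 0 := by positivity
  set A : ℝ := (p:ℝ)/q with hAdef
  simp only [Set.mem_insert_iff, Set.mem_singleton_iff, Prod.mk.injEq] at hij
  constructor
  · -- vertical edge: impossible
    rintro ⟨⟨z, hz, hz1, hz2⟩, ⟨z', hz', hz1', hz2'⟩⟩
    obtain ⟨t, ht1, ht2⟩ := mem_coords hA1 hz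
    obtain ⟨t', ht1', ht2'⟩ := mem_coords hA1 hz'
    have key := key_v_gen A (1/(2*(q:ℝ))) (-1/(2*(q:ℝ)) + 1/((p:ℝ)+(q:ℝ)) + (τ:ℝ))
      (i:ℝ) (j:ℝ) (m:ℝ) (n:ℝ) (m':ℝ) (n':ℝ) t t' z.1 z'.1 z.2 z'.2 hA1
      ht1 ht1' ht2 ht2' (by rw [hz1, hz1'])
    have hX : |z.2 - z'.2| < 1 := by
      rw [abs_sub_lt_iff]
      constructor <;> [skip; skip] <;>
        · obtain ⟨ha, hb⟩ := hz2; obtain ⟨ha', hb'⟩ := hz2'; linarith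
    rcases hij with ⟨rfl, rfl⟩ | ⟨rfl, rfl⟩ | ⟨rfl, rfl⟩ | ⟨rfl, rfl⟩
    · -- (i,j) = (1,0)
      have hN : (n' - n : ℤ) = 0 := by
        refine aux_int_zero _ (A+1) A (z.2 - z'.2) hA0 (by linarith) ?_ hX
        push_cast at key ⊢; linear_combination key
      exact hne (distLine_congr p q τ 1 0 m n m' n' (m - m') (by ring) (by omega))
    · -- (i,j) = (0,1)
      have hN : (m - m' : ℤ) = 0 := by
        refine aux_int_zero _ (A+1) 1 (z.2 - z'.2) one_pos (by linarith) ?_ hX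
        push_cast at key ⊢; linear_combination key
      exact hne (distLine_congr p q τ 0 1 m n m' n' (n - n') (by omega) (by ring))
    · -- (i,j) = (1,1)
      have hN : (m - m' - (n - n') : ℤ) = 0 := by
        refine aux_int_zero _ (A+1) (A+1) (z.2 - z'.2) (by linarith) le_rfl ?_ hX
        push_cast at key ⊢; linear_combination key
      exact hne (distLine_congr p q τ 1 1 m n m' n' (m - m') (by ring) (by omega))
    · -- (i,j) = (-1,1)
      have hN : (m - m' + (n - n') : ℤ) = 0 := by
        refine aux_int_zero _ (A+1) (1-A) (z.2 - z'.2) (by linarith) (by linarith) ?_ hX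
        push_cast at key ⊢; linear_combination key
      exact hne (distLine_congr p q τ (-1) 1 m n m' n' (n - n') (by omega) (by ring))
  · -- horizontal edge: forces (i,j) = (-1,1)
    rintro ⟨⟨z, hz, hz1, hz2⟩, ⟨z', hz', hz1', hz2'⟩⟩
    obtain ⟨t, ht1, ht2⟩ := mem_coords hA1 hz
    obtain ⟨t', ht1', ht2'⟩ := mem_coords hA1 hz'
    have key := key_h_gen A (1/(2*(q:ℝ))) (-1/(2*(q:ℝ)) + 1/((p:ℝ)+(q:ℝ)) + (τ:ℝ))
      (i:ℝ) (j:ℝ) (m:ℝ) (n:ℝ) (m':ℝ) (n':ℝ) t t' z.1 z'.1 z.2 z'.2 hA1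
      ht1 ht1' ht2 ht2' (by rw [hz1, hz1'])
    have hX : |z'.1 - z.1| < 1 := by
      rw [abs_sub_lt_iff]
      constructor <;> [skip; skip] <;>
        · obtain ⟨ha, hb⟩ := hz2; obtain ⟨ha', hb'⟩ := hz2'; linarith
    rcases hij with ⟨rfl, rfl⟩ | ⟨rfl, rfl⟩ | ⟨rfl, rfl⟩ | ⟨rfl, rfl⟩
    · -- (i,j) = (1,0): contradiction
      exfalso
      have hN : (n - n' : ℤ) = 0 := by
        refine aux_int_zero _ ((A+1)^2) (-A^2+2*A+1) (z.1 - z'.1) (by nlinarith) (by nlinarith) ?_ ?_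
        · push_cast at key ⊢; linear_combination key
        · rw [abs_sub_comm]; exact hX
      exact hne (distLine_congr p q τ 1 0 m n m' n' (m - m') (by ring) (by omega))
    · -- (i,j) = (0,1): contradiction
      exfalso
      have hN : (m' - m : ℤ) = 0 := by
        refine aux_int_zero _ ((A+1)^2) (2*A) (z'.1 - z.1) (by linarith) (by nlinarith) ?_ hX
        push_cast at key ⊢; linear_combination key
      exact hne (distLine_congr p q τ 0 1 m n m' n' (n - n') (by omega) (by ring))
    · -- (i,j) = (1,1): contradiction
      exfalso
      have hN : (m - m' - (n - n') : ℤ) = 0 := by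
        refine aux_int_zero _ ((A+1)^2) (1-A^2) (z'.1 - z.1) (by nlinarith) (by nlinarith) ?_ hX
        push_cast at key ⊢; linear_combination -key
      exact hne (distLine_congr p q τ 1 1 m n m' n' (m - m') (by ring) (by omega))
    · -- (i,j) = (-1,1): the conclusion
      rfl
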